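/- The operator X of multiplication by the grid variable λ_x = x² admits the quadratic expression X = (R₁ + R₂)(M₁ − L) − ½R₁M₂ − ½R₂M₁ in the S–Heun operators: for every function f : ℂ → ℂ and every x ∈ ℂ with x(x−1)(x+1) ≠ 0, ((R₁+R₂)((M₁−L)f))(x) − ½(R₁(M₂f))(x) − ½(R₂(M₁f))(x) = x²·f(x). -/

import Mathlib

noncomputable section

/-- The S–Heun lowering operator L on the quadratic grid λ_x = x². -/
def opL (f : ℂ → ℂ) : ℂ → ℂ := fun x => (f (x + 1) - f (x - 1)) / (4 * x)

/-- The stabilizing S–Heun operator M₁ on the quadratic grid. -/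
def opM1 (f : ℂ → ℂ) : ℂ → ℂ :=
  fun x => ((2 * x - 1) * f (x + 1) + (2 * x + 1) * f (x - 1)) / (4 * x)

/-- The stabilizing S–Heun operator M₂ on the quadratic grid. -/
def opM2 (f : ℂ → ℂ) : ℂ → ℂ :=
  fun x => ((x ^ 2 + (x - 1) ^ 2) * f (x + 1) - ((x + 1) ^ 2 + x ^ 2) * f (x - 1)) / (4 * x)

/-- The raising S–Heun operator R₁ = λ_x M₁ on the quadratic grid. -/
def opR1 (f : ℂ → ℂ) : ℂ → ℂ := fun x => x ^ 2 * opM1 f x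

/-- The raising S–Heun operator R₂ = λ_x M₂ on the quadratic grid. -/
def opR2 (f : ℂ → ℂ) : ℂ → ℂ := fun x => x ^ 2 * opM2 f x

/-- the multiplication operator X by the grid variable λ_x = x²
admits the quadratic expression X = (R₁+R₂)(M₁−L) − ½R₁M₂ − ½R₂M₁ in the
S–Heun operators. -/
theorem stmt5 (f : ℂ → ℂ) (x : ℂ) (hx : x * (x - 1) * (x + 1) ≠ 0) :
    opR1 (fun y => opM1 f y - opL f y) x + opR2 (fun y => opM1 f y - opL f y) x
      - (1 / 2) * opR1 (opM2 f) x - (1 / 2) * opR2 (opM1 f) x = x ^ 2 * f x := by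
  have h0 : x ≠ 0 := fun h => hx (by rw [h]; ring)
  have h1 : x - 1 ≠ 0 := fun h => hx (by rw [mul_assoc, h]; ring)
  have h2 : x + 1 ≠ 0 := fun h => hx (by rw [mul_assoc, h]; ring)
  simp only [opR1, opR2, opM1, opM2, opL]
  have e1 : x + 1 + 1 = x + 2 := by ring
  have e2 : x + 1 - 1 = x := by ring
  have e3 : x - 1 + 1 = x := by ring
  have e4 : x - 1 - 1 = x - 2 := by ring
  rw [e1, e2, e3, e4]
  have h5 : x ^ 3 * 128 - x * 128 ≠ 0 := by
    intro h
    apply hx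
    have h128 : (128:ℂ) ≠ 0 := by norm_num
    have : x * (x - 1) * (x + 1) * 128 = 0 := by linear_combination h
    exact (mul_eq_zero.mp this).resolve_right h128
  have hD : 4 * (x + 1) * (4 * (x - 1)) * (4 * x) ≠ 0 := by
    intro h
    apply hx
    have h64 : (64:ℂ) ≠ 0 := by norm_num
    have : x * (x - 1) * (x + 1) * 64 = 0 := by linear_combination h
    exact (mul_eq_zero.mp this).resolve_right h64
  have key : ∀ C : ℂ,
      4 * (x + 1) * (4 * (x - 1)) * (4 * x) * C / (2 * (4 * (x + 1) * (4 * (x - 1)) * (4 * x)))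
        = C / 2 := by
    intro C
    field_simp
  field_simp
  ring
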